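/- arXiv:1901.09031 — 4 statements merged into one kernel-verified Lean document; each statement's English description precedes it below -/
import Mathlib

section
/- Let (C, D, T') be a quantum Manin pair. Then the monoid object T^R(𝟙_D) in C is commutative: writing m : T^R(𝟙_D) ⊗ T^R(𝟙_D) ⟶ T^R(𝟙_D) for its multiplication and σ for the braiding of C, one has σ_{T^R(𝟙_D), T^R(𝟙_D)} ≫ m = m. -/
/-!
STATEMENT 0: Let `(C, D, T')` be a quantum Manin pair: `C` a braided monoidal category,
`D` a monoidal category, `T' : C ⥤ Z(D)` a braided monoidal functor to the Drinfeld center,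
`T = T' ⋙ forget` the underlying monoidal functor `C ⥤ D`, and `T^R : D ⥤ C` a right
adjoint of `T` equipped with the lax monoidal structure induced by the adjunction.
Then the monoid object `T^R(𝟙_D)` in `C` (with multiplication
`m = δ_{𝟙,𝟙} ≫ T^R(λ)`, where `δ` is the lax structure of `T^R`) is commutative:
`σ ≫ m = m` where `σ` is the braiding of `C`.
-/

open CategoryTheory MonoidalCategory CategoryTheory.Functor

universe v₁ v₂ u₁ u₂

/-- Any half-braiding, evaluated at the unit object, is the composite of unitors. -/
lemma halfBraiding_unit {C : Type*} [Category C] [MonoidalCategory C]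
    {X : C} (b : HalfBraiding X) :
    (b.β (𝟙_ C)).hom = (ρ_ X).hom ≫ (λ_ X).inv := by
  have h := b.naturality (ρ_ (𝟙_ C)).hom
  rw [b.monoidal] at h
  simp only [whiskerLeft_rightUnitor, Category.assoc, MonoidalCategory.whiskerRight_id,
    id_whiskerLeft, triangle_assoc_comp_right, Iso.hom_inv_id, Category.comp_id, Iso.inv_hom_id,
    Iso.cancel_iso_inv_left, Iso.cancel_iso_hom_left] at h
  conv_lhs at h => rw [← Category.comp_id (b.β (𝟙_ C)).hom]
  have h' := (cancel_epi (b.β (𝟙_ C)).hom).mp h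
  have h2 : (b.β (𝟙_ C)).hom =
      (λ_ (X ⊗ 𝟙_ C)).inv ≫ (α_ (𝟙_ C) X (𝟙_ C)).inv ≫ (ρ_ (𝟙_ C ⊗ X)).hom := by
    rw [Iso.eq_inv_comp, Iso.eq_inv_comp]
    rw [Iso.eq_inv_comp] at h'
    simpa using h'.symm
  rw [h2]
  monoidal

/-- A half-braiding composed with a "multiplication to the unit" of the form
`(f ⊗ₘ f) ≫ λ` leaves this map unchanged. -/
lemma halfBraiding_counit {C : Type*} [Category C] [MonoidalCategory C]
    {X : C} (b : HalfBraiding X) (f : X ⟶ 𝟙_ C) :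
    (b.β X).hom ≫ (f ⊗ₘ f) ≫ (λ_ (𝟙_ C)).hom = (f ⊗ₘ f) ≫ (λ_ (𝟙_ C)).hom := by
  simp only [MonoidalCategory.tensorHom_def, Category.assoc]
  rw [← HalfBraiding.naturality_assoc, halfBraiding_unit b]
  simp only [Category.assoc, leftUnitor_naturality, Iso.inv_hom_id_assoc]
  rw [← rightUnitor_naturality, ← leftUnitor_naturality, whisker_exchange_assoc, ← unitors_equal]

theorem stmt_0 {C : Type u₁} [Category.{v₁} C] [MonoidalCategory C] [BraidedCategory C]
    {D : Type u₂} [Category.{v₂} D] [MonoidalCategory D]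
    (T' : C ⥤ Center D) [T'.Braided]
    (TR : D ⥤ C) [TR.LaxMonoidal]
    (adj : (T' ⋙ Center.forget D) ⊣ TR) [adj.IsMonoidal] :
    (β_ (TR.obj (𝟙_ D)) (TR.obj (𝟙_ D))).hom ≫
        (LaxMonoidal.μ TR (𝟙_ D) (𝟙_ D) ≫ TR.map (λ_ (𝟙_ D)).hom) =
      LaxMonoidal.μ TR (𝟙_ D) (𝟙_ D) ≫ TR.map (λ_ (𝟙_ D)).hom := by
  apply (adj.homEquiv (TR.obj (𝟙_ D) ⊗ TR.obj (𝟙_ D)) (𝟙_ D)).symm.injective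
  rw [Adjunction.homEquiv_counit, Adjunction.homEquiv_counit]
  simp only [Functor.map_comp, Category.assoc, Adjunction.counit_naturality,
    Adjunction.map_μ_comp_counit_app_tensor_assoc]
  simp only [Functor.comp_map, Functor.map_braiding, Functor.OplaxMonoidal.comp_δ,
    Center.forget_map, Center.forget_δ, Center.comp_f, Category.comp_id, Category.assoc]
  show ((OplaxMonoidal.δ T' (TR.obj (𝟙_ D)) (TR.obj (𝟙_ D))).f ≫
        (β_ (T'.obj (TR.obj (𝟙_ D))) (T'.obj (TR.obj (𝟙_ D)))).hom.f ≫
          (LaxMonoidal.μ T' (TR.obj (𝟙_ D)) (TR.obj (𝟙_ D))).f) ≫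
      ((OplaxMonoidal.δ T' (TR.obj (𝟙_ D)) (TR.obj (𝟙_ D))).f ≫ 𝟙 _) ≫
        (adj.counit.app (𝟙_ D) ⊗ₘ adj.counit.app (𝟙_ D)) ≫ (λ_ (𝟙_ D)).hom =
    ((OplaxMonoidal.δ T' (TR.obj (𝟙_ D)) (TR.obj (𝟙_ D))).f ≫ 𝟙 _) ≫
      (adj.counit.app (𝟙_ D) ⊗ₘ adj.counit.app (𝟙_ D)) ≫ (λ_ (𝟙_ D)).hom
  simp only [Category.comp_id, Category.assoc]
  slice_lhs 3 4 => rw [← Center.comp_f, Functor.Monoidal.μ_δ]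
  simp only [Center.id_f, Category.id_comp, Category.assoc]
  have key := halfBraiding_counit (T'.obj (TR.obj (𝟙_ D))).2 (adj.counit.app (𝟙_ D))
  have hb : (β_ (T'.obj (TR.obj (𝟙_ D))) (T'.obj (TR.obj (𝟙_ D)))).hom.f =
      ((T'.obj (TR.obj (𝟙_ D))).2.β (T'.obj (TR.obj (𝟙_ D))).1).hom := rfl
  rw [hb]
  exact whisker_eq _ key
end

section
/- Let (C, D, T') be a quantum Manin pair and let η denote the unit of the adjunction T ⊣ T^R and δ the lax monoidal structure maps of T^R. Then T^R is lax C-monoidal: for every X ∈ C and V ∈ D, the two composites X ⊗ T^R(V) ⟶ T^R(V ⊗ T(X)) agree, namely (η_X ⊗ id_{T^R(V)}) ≫ δ_{T(X), V} ≫ T^R(τ_{X,V}) equals σ_{X, T^R(V)} ≫ (id_{T^R(V)} ⊗ η_X) ≫ δ_{V, T(X)}, where σ is the braiding of C and τ_{X,V} : T(X) ⊗ V ≅ V ⊗ T(X) is the half-braiding of T'(X). -/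
/-!
STATEMENT 1: Let `(C, D, T')` be a quantum Manin pair (`C` braided monoidal, `D` monoidal,
`T' : C ⥤ Z(D)` braided monoidal, `T = T' ⋙ forget`, `T^R` a right adjoint of `T` with the
lax monoidal structure `δ` induced by the adjunction, `η` the unit of the adjunction).
Then `T^R` is lax `C`-monoidal: for every `X ∈ C`, `V ∈ D` the two composites
`X ⊗ T^R(V) ⟶ T^R(V ⊗ T(X))` agree:
`(η_X ▷ T^R V) ≫ δ_{T X, V} ≫ T^R(τ_{X,V}) = σ_{X, T^R V} ≫ (T^R V ◁ η_X) ≫ δ_{V, T X}`,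
where `σ` is the braiding of `C` and `τ_{X,V}` the half-braiding of `T'(X)` at `V`.
-/

open CategoryTheory MonoidalCategory CategoryTheory.Functor

universe v₁ v₂ u₁ u₂

theorem stmt_1 {C : Type u₁} [Category.{v₁} C] [MonoidalCategory C] [BraidedCategory C]
    {D : Type u₂} [Category.{v₂} D] [MonoidalCategory D]
    (T' : C ⥤ Center D) [T'.Braided]
    (TR : D ⥤ C) [TR.LaxMonoidal]
    (adj : (T' ⋙ Center.forget D) ⊣ TR) [adj.IsMonoidal]
    (X : C) (V : D) :
    (adj.unit.app X ▷ TR.obj V) ≫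
        LaxMonoidal.μ TR ((T' ⋙ Center.forget D).obj X) V ≫
        TR.map ((T'.obj X).2.β V).hom =
      (β_ X (TR.obj V)).hom ≫
        (TR.obj V ◁ adj.unit.app X) ≫
        LaxMonoidal.μ TR V ((T' ⋙ Center.forget D).obj X) := by
  obtain ⟨u, hu⟩ : ∃ u : X ⟶ TR.obj ((T' ⋙ Center.forget D).obj X), u = adj.unit.app X := ⟨_, rfl⟩
  rw [← hu]
  have htri : (T' ⋙ Center.forget D).map u ≫ adj.counit.app ((T' ⋙ Center.forget D).obj X) = 𝟙 ((T' ⋙ Center.forget D).obj X) := by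
    rw [hu]; exact adj.left_triangle_components X
  apply (adj.homEquiv _ _).symm.injective
  simp only [Adjunction.homEquiv_counit, Functor.map_comp, Category.assoc]
  erw [adj.counit_naturality, adj.map_μ_comp_counit_app_tensor_assoc]
  conv_rhs => erw [Adjunction.homEquiv_counit, Functor.map_comp, Functor.map_comp, Category.assoc, Category.assoc]
  erw [adj.map_μ_comp_counit_app_tensor (X := V) (Y := (T' ⋙ Center.forget D).obj X)]
  erw [← OplaxMonoidal.δ_natural_left_assoc (F := T' ⋙ Center.forget D) u (TR.obj V),
    ← OplaxMonoidal.δ_natural_right_assoc (F := T' ⋙ Center.forget D) (TR.obj V) u]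
  erw [tensorHom_def_assoc (f := adj.counit.app ((T' ⋙ Center.forget D).obj X))
    (g := adj.counit.app V),
    tensorHom_def' (f := adj.counit.app V)
    (g := adj.counit.app ((T' ⋙ Center.forget D).obj X))]
  dsimp only [Functor.comp_obj, Functor.id_obj] at htri ⊢
  erw [← comp_whiskerRight_assoc, htri, id_whiskerRight, Category.id_comp,
    ← MonoidalCategory.whiskerLeft_comp_assoc, htri, MonoidalCategory.whiskerLeft_id,
    Category.id_comp]
  erw [Functor.comp_map, Functor.map_braiding, Functor.map_comp, Functor.map_comp,
    OplaxMonoidal.comp_δ, OplaxMonoidal.comp_δ]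
  simp only [Center.forget_δ, Center.forget_map, Category.comp_id, Category.assoc,
    Center.comp_f, Center.braiding_hom_f]
  have hb : (β_ (T'.obj X) (T'.obj (TR.obj V))).hom.f
      = ((T'.obj X).2.β (T'.obj (TR.obj V)).1).hom := rfl
  have hc : (LaxMonoidal.μ T' (TR.obj V) X).f ≫ (OplaxMonoidal.δ T' (TR.obj V) X).f
      = 𝟙 _ := by rw [← Center.comp_f, Functor.Monoidal.μ_δ]; rfl
  erw [Category.comp_id, Category.comp_id, Category.assoc, Category.assoc, ← Category.assoc ((LaxMonoidal.μ T' (TR.obj V) X).f), hc, Category.id_comp]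
  congr 1
  exact (T'.obj X).2.naturality (adj.counit.app V)
end

section
/- Let (C, D, T') be a quantum Manin pair and set 𝓕 = T(T^R(𝟙_D)), a monoid object in D with multiplication m_𝓕. Then the identity morphism of 𝓕 is a quantum moment map; equivalently, the multiplication of 𝓕 is invariant under the half-braiding: m_𝓕 = τ_{T^R(𝟙_D), 𝓕} ≫ m_𝓕 as morphisms 𝓕 ⊗ 𝓕 ⟶ 𝓕, where τ_{T^R(𝟙_D), 𝓕} : 𝓕 ⊗ 𝓕 ⟶ 𝓕 ⊗ 𝓕 is the half-braiding of T'(T^R(𝟙_D)) evaluated at 𝓕. -/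
/-!
STATEMENT 5: Let `(C, D, T')` be a quantum Manin pair and set `𝓕 = T(T^R(𝟙_D))`, the
monoid object of `D` obtained by applying the monoidal functor `T` to the monoid
`T^R(𝟙_D)` in `C` (which itself comes from applying the lax monoidal functor `T^R` to the
trivial monoid `𝟙_D`).  Then the identity of `𝓕` is a quantum moment map; equivalently,
the multiplication of `𝓕` is invariant under the half-braiding:
`m_𝓕 = τ_{T^R(𝟙_D), 𝓕} ≫ m_𝓕`, where `τ_{T^R(𝟙_D), 𝓕}` is the half-braiding of
`T'(T^R(𝟙_D))` evaluated at the underlying object of `𝓕`.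
-/

open CategoryTheory MonoidalCategory CategoryTheory.Functor

universe v₁ v₂ u₁ u₂

section Aux
variable {D : Type u₂} [Category.{v₂} D] [MonoidalCategory D]

lemma halfBraiding_unit_s5 (A : Center D) :
    (A.2.β (𝟙_ D)).hom = (ρ_ A.1).hom ≫ (λ_ A.1).inv := by
  have h2 := congrArg Center.Hom.f (braiding_leftUnitor (C := Center D) A)
  rw [Center.comp_f, Center.leftUnitor_hom_f, Center.rightUnitor_hom_f] at h2
  have hb : ((β_ A (𝟙_ (Center D))).hom).f = (A.2.β (𝟙_ D)).hom := rfl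
  rw [hb] at h2
  rw [← h2]; simp
  exact ((Category.assoc _ _ _).trans (by erw [Iso.hom_inv_id, Category.comp_id])).symm

lemma halfBraiding_counit_s5 (A : Center D) (e : A.1 ⟶ 𝟙_ D) :
    (A.2.β A.1).hom ≫ (e ⊗ₘ e) ≫ (λ_ (𝟙_ D)).hom = (e ⊗ₘ e) ≫ (λ_ (𝟙_ D)).hom := by
  rw [MonoidalCategory.tensorHom_def]
  slice_lhs 1 2 => rw [← HalfBraiding.naturality]
  rw [halfBraiding_unit_s5, ← whisker_exchange]
  have hu : (ρ_ (𝟙_ D)).inv ≫ (λ_ (𝟙_ D)).hom = 𝟙 _ := by monoidal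
  simp [hu]
end Aux

theorem stmt_5 {C : Type u₁} [Category.{v₁} C] [MonoidalCategory C] [BraidedCategory C]
    {D : Type u₂} [Category.{v₂} D] [MonoidalCategory D]
    (T' : C ⥤ Center D) [T'.Braided]
    (TR : D ⥤ C) [TR.LaxMonoidal]
    (adj : (T' ⋙ Center.forget D) ⊣ TR) [adj.IsMonoidal]
    :
    -- `𝓕 = T(T^R(𝟙_D))` as a monoid object in `D`:
    let F : Mon D := ((T' ⋙ Center.forget D).mapMon).obj ((TR.mapMon).obj (Mon.trivial D))
    F.mon.mul = ((T'.obj (TR.obj (𝟙_ D))).2.β F.X).hom ≫ F.mon.mul := by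
  intro F
  set X : C := TR.obj (𝟙_ D) with hX
  set m : X ⊗ X ⟶ X :=
    LaxMonoidal.μ TR (𝟙_ D) (𝟙_ D) ≫ TR.map (λ_ (𝟙_ D)).hom with hm
  set τ : (T' ⋙ Center.forget D).obj X ⊗ (T' ⋙ Center.forget D).obj X ⟶
      (T' ⋙ Center.forget D).obj X ⊗ (T' ⋙ Center.forget D).obj X :=
    ((T'.obj X).2.β ((T' ⋙ Center.forget D).obj X)).hom with hτ
  have hμ : LaxMonoidal.μ (T' ⋙ Center.forget D) X X = (LaxMonoidal.μ T' X X).f := by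
    simp [Functor.LaxMonoidal.comp_μ]
    exact Category.id_comp _
  -- braided compatibility, in D
  have hbr : LaxMonoidal.μ (T' ⋙ Center.forget D) X X ≫
        (T' ⋙ Center.forget D).map (β_ X X).hom =
      τ ≫ LaxMonoidal.μ (T' ⋙ Center.forget D) X X := by
    have h2 := congrArg Center.Hom.f (Functor.LaxBraided.braided (F := T') X X)
    rw [Center.comp_f, Center.comp_f] at h2
    rw [hμ]
    exact h2
  -- commutativity of TR(𝟙) in C
  have hcomm : (β_ X X).hom ≫ m = m := by
    apply (adj.homEquiv _ _).symm.injective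
    rw [Adjunction.homEquiv_counit, Adjunction.homEquiv_counit]
    have hTmapm : (T' ⋙ Center.forget D).map m ≫ adj.counit.app (𝟙_ D) =
        Functor.OplaxMonoidal.δ (T' ⋙ Center.forget D) X X ≫
          (adj.counit.app (𝟙_ D) ⊗ₘ adj.counit.app (𝟙_ D)) ≫ (λ_ (𝟙_ D)).hom := by
      rw [hm, Functor.map_comp, Category.assoc]
      have hnat := adj.counit.naturality (λ_ (𝟙_ D)).hom
      rw [show (T' ⋙ Center.forget D).map (TR.map (λ_ (𝟙_ D)).hom) ≫
          adj.counit.app (𝟙_ D) =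
          adj.counit.app (𝟙_ D ⊗ 𝟙_ D) ≫ (λ_ (𝟙_ D)).hom from hnat]
      rw [Adjunction.map_μ_comp_counit_app_tensor_assoc]
    rw [Functor.map_comp, Category.assoc, hTmapm]
    have hmapβ : (T' ⋙ Center.forget D).map (β_ X X).hom =
        Functor.OplaxMonoidal.δ (T' ⋙ Center.forget D) X X ≫ τ ≫
          LaxMonoidal.μ (T' ⋙ Center.forget D) X X := by
      rw [← hbr, Functor.Monoidal.δ_μ_assoc]
    rw [hmapβ]
    simp only [Category.assoc, Functor.Monoidal.μ_δ_assoc]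
    congr 1
    exact halfBraiding_counit_s5 (T'.obj X) (adj.counit.app (𝟙_ D))
  -- conclude
  show LaxMonoidal.μ (T' ⋙ Center.forget D) X X ≫ (T' ⋙ Center.forget D).map m =
    τ ≫ LaxMonoidal.μ (T' ⋙ Center.forget D) X X ≫ (T' ⋙ Center.forget D).map m
  conv_rhs => rw [← Category.assoc, ← hbr, Category.assoc, ← Functor.map_comp, hcomm]
end

section
/- Let k be a field of characteristic different from 2, V a finite-dimensional k-vector space, B a nondegenerate symmetric bilinear form on V, and W ⊆ V a Lagrangian subspace (W equals its B-orthogonal complement). Let b : V ≅ V* be the isomorphism induced by B and let c be the bilinear form on V* given by c(φ, ψ) = φ(b⁻¹(ψ)). Suppose R : V* → V is a linear map whose range is contained in W and which satisfies ψ(R(φ)) + φ(R(ψ)) = 2·c(φ, ψ) for all φ, ψ ∈ V*. Then the restriction of R to the annihilator W° = { φ ∈ V* : φ|_W = 0 } is injective and maps W° bijectively onto W. -/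
/-!
STATEMENT 10: Let `k` be a field with `char k ≠ 2`, `V` a finite-dimensional `k`-vector
space, `B` a nondegenerate symmetric bilinear form on `V`, and `W ⊆ V` a Lagrangian
subspace (`W` equals its `B`-orthogonal complement).  Let `b : V ≃ V*` be induced by `B`
and `c(φ, ψ) = φ(b⁻¹(ψ))`.  If `R : V* → V` is a linear map with range contained in `W`
such that `ψ(R(φ)) + φ(R(ψ)) = 2·c(φ, ψ)` for all `φ, ψ ∈ V*`, then `R` restricted to the
annihilator `W°` is injective and maps `W°` bijectively onto `W`.
-/

theorem stmt_10 {k V : Type*} [Field k] [AddCommGroup V] [Module k V]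
    [FiniteDimensional k V]
    (hchar : (2 : k) ≠ 0)
    (B : LinearMap.BilinForm k V) (hB : B.Nondegenerate) (hBsymm : B.IsSymm)
    (W : Submodule k V) (hW : W = B.orthogonal W)
    (R : Module.Dual k V →ₗ[k] V)
    (hrange : ∀ φ : Module.Dual k V, R φ ∈ W)
    (hsymmetrized : ∀ φ ψ : Module.Dual k V,
      ψ (R φ) + φ (R ψ) = 2 * φ ((B.toDual hB).symm ψ)) :
    Set.InjOn R (W.dualAnnihilator : Set (Module.Dual k V)) ∧
      Set.BijOn R (W.dualAnnihilator : Set (Module.Dual k V)) (W : Set V) := by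
  -- Key: if φ ∈ W° and R φ = 0 then φ = 0
  have hker : ∀ φ ∈ W.dualAnnihilator, R φ = 0 → φ = 0 := by
    intro φ hφ hRφ
    rw [Submodule.mem_dualAnnihilator] at hφ
    have hx : (B.toDual hB).symm φ = 0 := by
      rw [← Module.forall_dual_apply_eq_zero_iff k]
      intro χ
      have h := hsymmetrized χ φ
      rw [hRφ, hφ (R χ) (hrange χ)] at h
      simp only [map_zero, add_zero, zero_add] at h
      exact (mul_eq_zero.mp h.symm).resolve_left hchar
    have := congrArg (B.toDual hB) hx
    rwa [LinearEquiv.apply_symm_apply, map_zero] at this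
  -- injectivity on W°
  have hinjOn : Set.InjOn R (W.dualAnnihilator : Set (Module.Dual k V)) := by
    intro φ hφ ψ hψ hEq
    have hmem : φ - ψ ∈ W.dualAnnihilator := sub_mem hφ hψ
    have : R (φ - ψ) = 0 := by rw [map_sub, hEq, sub_self]
    have := hker _ hmem this
    exact sub_eq_zero.mp this
  refine ⟨hinjOn, ?_, hinjOn, ?_⟩
  · intro φ hφ
    exact hrange φ
  · -- surjectivity onto W via dimension count
    have hrefl : B.IsRefl := hBsymm.isRefl
    have hdim1 : Module.finrank k (B.orthogonal W) =
        Module.finrank k V - Module.finrank k W :=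
      LinearMap.BilinForm.finrank_orthogonal hB W
    have hdimW : Module.finrank k W = Module.finrank k V - Module.finrank k W := by
      conv_lhs => rw [hW]
      exact hdim1
    have hdimAnn : Module.finrank k W.dualAnnihilator = Module.finrank k W := by
      rw [← (Subspace.quotEquivAnnihilator W).finrank_eq]
      have h := Submodule.finrank_quotient_add_finrank W
      have hle := Submodule.finrank_le W
      omega
    -- the restricted linear map
    set S : W.dualAnnihilator →ₗ[k] W :=
      R.restrict (p := W.dualAnnihilator) (q := W) (fun x _ => hrange x) with hS
    have hSinj : Function.Injective S := by
      intro x y h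
      have hv : R x.1 = R y.1 := congrArg Subtype.val h
      exact Subtype.ext (hinjOn x.2 y.2 hv)
    have hSsurj : Function.Surjective S :=
      (LinearMap.injective_iff_surjective_of_finrank_eq_finrank (V := W.dualAnnihilator) (V₂ := W) hdimAnn).mp hSinj
    intro w hw
    obtain ⟨⟨φ, hφ⟩, hφw⟩ := hSsurj ⟨w, hw⟩
    exact ⟨φ, hφ, congrArg Subtype.val hφw⟩
end
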